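/- Let d = p ≡ 3 (mod 8) be prime and let v be the Legendre vector built from a unimodular x₁ and √x₀ (x₀ = −2−√(d+1)). Then for every j ≠ 0 with (j/d) = 1, ⟨v|X^{−2j}|v⟩ = (d−3)/2 − ((d−3)/4)·(1/x₁²) − ((d+1)/4)·x₁² + 2√x₀/x₁. -/

import Mathlib

open Matrix Finset ComplexConjugate

noncomputable section

/-- ω = exp(2πi/d) -/
def omg (d : ℕ) : ℂ := Complex.exp (2 * Real.pi * Complex.I / d)

/-- τ = -exp(πi/d) -/
def tau (d : ℕ) : ℂ := -Complex.exp (Real.pi * Complex.I / d)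

/-- The clock matrix `Z`, with `Z|r⟩ = ω^r |r⟩`. -/
def Zmat (d : ℕ) [NeZero d] : Matrix (ZMod d) (ZMod d) ℂ :=
  Matrix.diagonal fun r => omg d ^ r.val

/-- The shift matrix `X`, with `X|r⟩ = |r+1⟩` (indices mod d). -/
def Xmat (d : ℕ) [NeZero d] : Matrix (ZMod d) (ZMod d) ℂ :=
  Matrix.of fun r s => if r = s + 1 then 1 else 0

/-- The displacement operators `D_{j,k} = τ^{jk} X^j Z^k`. -/
def Dmat (d : ℕ) [NeZero d] (j k : ZMod d) : Matrix (ZMod d) (ZMod d) ℂ :=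
  tau d ^ (j.val * k.val) • (Xmat d ^ j.val * Zmat d ^ k.val)

/-- Standard Hermitian inner product, conjugate-linear in the first argument. -/
def ip {d : ℕ} [NeZero d] (u w : ZMod d → ℂ) : ℂ := ∑ k, conj (u k) * w k

lemma Xmat_mulVec {p : ℕ} [NeZero p] (w : ZMod p → ℂ) (r : ZMod p) :
    (Xmat p *ᵥ w) r = w (r - 1) := by
  simp only [Xmat, Matrix.mulVec, dotProduct, Matrix.of_apply]
  rw [Finset.sum_eq_single (r - 1)]
  · simp
  · intro b _ hb
    rw [if_neg, zero_mul]
    intro h; exact hb (by rw [h]; ring)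
  · simp

lemma Xmat_pow_mulVec {p : ℕ} [NeZero p] (n : ℕ) (w : ZMod p → ℂ) (r : ZMod p) :
    ((Xmat p ^ n) *ᵥ w) r = w (r - n) := by
  induction n generalizing r with
  | zero => simp
  | succ n ih =>
    rw [pow_succ', ← Matrix.mulVec_mulVec, Xmat_mulVec, ih]
    congr 1
    push_cast
    ring

lemma jacobsthal_sum (p : ℕ) [Fact p.Prime] (hp2 : p ≠ 2) (c : ZMod p) (hc : c ≠ 0) :
    ∑ r : ZMod p, (quadraticChar (ZMod p) r) * (quadraticChar (ZMod p) (r + c)) = -1 := by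
  classical
  set χ := quadraticChar (ZMod p) with hχ
  have key : ∀ r : ZMod p, r ≠ 0 → χ r * χ (r + c) = χ (1 + c * r⁻¹) := by
    intro r hr
    have h : r + c = r * (1 + c * r⁻¹) := by field_simp
    rw [h, _root_.map_mul, ← mul_assoc, ← sq, quadraticChar_sq_one hr, one_mul]
  rw [show (∑ r : ZMod p, χ r * χ (r + c)) = ∑ r ∈ Finset.univ.erase (0 : ZMod p), χ r * χ (r + c) from
    (Finset.sum_erase _ (by simp [hχ, quadraticChar_zero])).symm]
  rw [Finset.sum_congr rfl (fun r hr => key r (Finset.ne_of_mem_erase hr))]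
  have hbij : ∑ r ∈ Finset.univ.erase (0 : ZMod p), χ (1 + c * r⁻¹)
      = ∑ w ∈ Finset.univ.erase (1 : ZMod p), χ w := by
    apply Finset.sum_nbij' (i := fun r => 1 + c * r⁻¹) (j := fun w => c * (w - 1)⁻¹)
    · intro a ha
      have ha0 : a ≠ 0 := Finset.ne_of_mem_erase ha
      simp only [Finset.mem_erase, Finset.mem_univ, and_true]
      intro h
      have : c * a⁻¹ = 0 := by linear_combination h
      simp [ha0, hc] at this
    · intro a ha
      have ha1 : a ≠ 1 := Finset.ne_of_mem_erase ha
      simp only [Finset.mem_erase, Finset.mem_univ, and_true]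
      simp [hc, sub_eq_zero, ha1]
    · intro a ha
      have ha0 : a ≠ 0 := Finset.ne_of_mem_erase ha
      field_simp
      simp [hc]
    · intro a ha
      have ha1 : a ≠ 1 := Finset.ne_of_mem_erase ha
      have : a - 1 ≠ 0 := sub_ne_zero.mpr ha1
      field_simp
      ring
    · intro a ha; rfl
  rw [hbij]
  have hsum : ∑ w : ZMod p, χ w = 0 :=
    quadraticChar_sum_zero (by rw [ZMod.ringChar_zmod_n]; exact hp2)
  have := Finset.sum_erase_add Finset.univ χ (Finset.mem_univ (1 : ZMod p))
  rw [hsum] at this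
  simp only [hχ] at this ⊢
  rw [_root_.map_one] at this
  linarith

set_option maxHeartbeats 2000000 in
/-- for d = p ≡ 3 (mod 8) prime and v the Legendre vector, for every
j ≠ 0 with (j/d) = 1 we have
`⟨v|X^{−2j}|v⟩ = (d−3)/2 − ((d−3)/4)(1/x₁²) − ((d+1)/4)x₁² + 2√x₀/x₁`. -/
theorem legendre_vector_xoverlap_3mod8 (p : ℕ) [NeZero p] (hp : p.Prime) (hp8 : p % 8 = 3)
    (x₁ : ℂ) (hx₁ : ‖x₁‖ = 1) (v : ZMod p → ℂ)
    (hv0 : v 0 = Complex.I * Real.sqrt (2 + Real.sqrt (p + 1)))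
    (hvQ : ∀ j : ZMod p, j ≠ 0 → IsSquare j → v j = x₁)
    (hvN : ∀ j : ZMod p, j ≠ 0 → ¬IsSquare j → v j = -1 / x₁) :
    ∀ j : ZMod p, j ≠ 0 → IsSquare j →
      ip v ((Xmat p ^ (-2 * j : ZMod p).val) *ᵥ v) =
        ((p : ℂ) - 3) / 2 - (((p : ℂ) - 3) / 4) * (1 / x₁ ^ 2)
          - (((p : ℂ) + 1) / 4) * x₁ ^ 2
          + 2 * (Complex.I * Real.sqrt (2 + Real.sqrt (p + 1))) / x₁ := by
  haveI : Fact p.Prime := ⟨hp⟩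
  intro j hj hjsq
  classical
  set χ := quadraticChar (ZMod p) with hχdef
  have hp2 : p ≠ 2 := by omega
  have hp4 : p % 4 = 3 := by omega
  have hx0 : x₁ ≠ 0 := by intro h; rw [h] at hx₁; simp at hx₁
  have hconj : conj x₁ = x₁⁻¹ := by
    refine eq_inv_of_mul_eq_one_right ?_
    rw [Complex.mul_conj, Complex.normSq_eq_norm_sq, hx₁]; norm_num
  -- quadratic character facts
  have h2ns : ¬IsSquare (2 : ZMod p) := by
    rw [ZMod.exists_sq_eq_two_iff hp2]; omega
  have hn1ns : ¬IsSquare (-1 : ZMod p) := by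
    rw [ZMod.exists_sq_eq_neg_one_iff]; omega
  have hχj : χ j = 1 := (quadraticChar_one_iff_isSquare hj).mpr hjsq
  have hχ2 : χ 2 = -1 := quadraticChar_neg_one_iff_not_isSquare.mpr h2ns
  have hχn1 : χ (-1) = -1 := quadraticChar_neg_one_iff_not_isSquare.mpr hn1ns
  set c : ZMod p := 2 * j with hcdef
  have hχc : χ c = -1 := by rw [hcdef, _root_.map_mul, hχ2, hχj]; ring
  have h20 : (2 : ZMod p) ≠ 0 := by
    intro h; rw [h] at hχ2; rw [quadraticChar_zero] at hχ2; exact absurd hχ2 (by norm_num)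
  have hc0 : c ≠ 0 := mul_ne_zero h20 hj
  have hχnc : χ (-c) = 1 := by
    rw [show (-c : ZMod p) = -1 * c by ring, _root_.map_mul, hχn1, hχc]; ring
  have hcns : ¬IsSquare c := quadraticChar_neg_one_iff_not_isSquare.mp hχc
  have hnc0 : (-c : ZMod p) ≠ 0 := neg_ne_zero.mpr hc0
  have hncsq : IsSquare (-c : ZMod p) := (quadraticChar_one_iff_isSquare hnc0).mp hχnc
  -- rewrite the inner product
  have hval : (((-2 * j : ZMod p).val : ZMod p)) = -c := by
    rw [ZMod.natCast_val, ZMod.cast_id]; rw [hcdef]; ring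
  set f : ZMod p → ℂ := fun k => conj (v k) * v (k + c) with hfdef
  have hip : ip v ((Xmat p ^ (-2 * j : ZMod p).val) *ᵥ v) = ∑ k, f k := by
    rw [ip]
    refine Finset.sum_congr rfl fun k _ => ?_
    rw [Xmat_pow_mulVec, hval, sub_neg_eq_add]
  rw [hip]
  -- split off k = 0 and k = -c
  have hmem1 : (-c : ZMod p) ∈ Finset.univ.erase (0 : ZMod p) := by
    simp [hnc0]
  set T : Finset (ZMod p) := (Finset.univ.erase (0 : ZMod p)).erase (-c) with hTdef
  have hsplit : ∑ k, f k = f 0 + f (-c) + ∑ k ∈ T, f k := by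
    rw [← Finset.add_sum_erase _ f (Finset.mem_univ (0 : ZMod p)),
        ← Finset.add_sum_erase _ f hmem1]
    ring
  rw [hsplit]
  set s : ℝ := Real.sqrt (2 + Real.sqrt (p + 1)) with hsdef
  have hf0 : f 0 = Complex.I * s / x₁ := by
    rw [hfdef]
    simp only [zero_add]
    rw [hv0, hvN c hc0 hcns]
    simp only [_root_.map_mul, Complex.conj_I, Complex.conj_ofReal]
    field_simp
  have hfc : f (-c) = Complex.I * s / x₁ := by
    rw [hfdef]
    simp only [neg_add_cancel]
    rw [hv0, hvQ (-c) hnc0 hncsq, hconj]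
    field_simp
  -- the pointwise rewriting on T
  have hpw : ∀ r ∈ T, f r =
      (2 - x₁⁻¹ ^ 2 - x₁ ^ 2) / 4 + (x₁ ^ 2 - x₁⁻¹ ^ 2) / 4 * ((χ r : ℤ) : ℂ)
        + (x₁⁻¹ ^ 2 - x₁ ^ 2) / 4 * ((χ (r + c) : ℤ) : ℂ)
        + (2 + x₁⁻¹ ^ 2 + x₁ ^ 2) / 4 * (((χ r : ℤ) : ℂ) * ((χ (r + c) : ℤ) : ℂ)) := by
    intro r hr
    have hrc : r ≠ -c := Finset.ne_of_mem_erase hr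
    have hr0 : r ≠ 0 := Finset.ne_of_mem_erase (Finset.mem_of_mem_erase hr)
    have hrc0 : r + c ≠ 0 := fun h => hrc (by linear_combination h)
    rw [hfdef]
    simp only []
    rcases em (IsSquare r) with hsr | hsr <;> rcases em (IsSquare (r + c)) with hsrc | hsrc
    · rw [hvQ r hr0 hsr, hvQ (r + c) hrc0 hsrc, hconj,
        (quadraticChar_one_iff_isSquare hr0).mpr hsr,
        (quadraticChar_one_iff_isSquare hrc0).mpr hsrc]
      push_cast
      field_simp
      ring
    · rw [hvQ r hr0 hsr, hvN (r + c) hrc0 hsrc, hconj,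
        (quadraticChar_one_iff_isSquare hr0).mpr hsr,
        quadraticChar_neg_one_iff_not_isSquare.mpr hsrc]
      push_cast
      field_simp
      ring
    · rw [hvN r hr0 hsr, hvQ (r + c) hrc0 hsrc,
        quadraticChar_neg_one_iff_not_isSquare.mpr hsr,
        (quadraticChar_one_iff_isSquare hrc0).mpr hsrc]
      rw [show conj (-1 / x₁) = -1 / conj x₁ by simp, hconj]
      push_cast
      field_simp
      ring
    · rw [hvN r hr0 hsr, hvN (r + c) hrc0 hsrc,
        quadraticChar_neg_one_iff_not_isSquare.mpr hsr,
        quadraticChar_neg_one_iff_not_isSquare.mpr hsrc]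
      rw [show conj (-1 / x₁) = -1 / conj x₁ by simp, hconj]
      push_cast
      field_simp
      ring
  rw [Finset.sum_congr rfl hpw]
  -- cardinality of T
  obtain ⟨m, hm⟩ : ∃ m, p = m + 2 := ⟨p - 2, by have := hp.two_le; omega⟩
  have hcard : (T.card : ℂ) = (p : ℂ) - 2 := by
    rw [hTdef, Finset.card_erase_of_mem hmem1,
      Finset.card_erase_of_mem (Finset.mem_univ _), Finset.card_univ, ZMod.card, hm]
    push_cast
    ring
  -- character sums over T
  have hring : ringChar (ZMod p) ≠ 2 := by rw [ZMod.ringChar_zmod_n]; exact hp2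
  have e0 : ∑ r ∈ Finset.univ.erase (0 : ZMod p), χ r = 0 := by
    have h := Finset.sum_erase_add Finset.univ χ (Finset.mem_univ (0 : ZMod p))
    rw [quadraticChar_sum_zero hring] at h
    rw [hχdef] at h ⊢
    rw [quadraticChar_zero] at h
    linarith
  have hS1 : ∑ r ∈ T, χ r = -1 := by
    have h := Finset.sum_erase_add (Finset.univ.erase 0) χ hmem1
    rw [e0, hχnc] at h
    rw [hTdef]
    linarith
  have hS2 : ∑ r ∈ T, χ (r + c) = 1 := by
    have e : ∑ r : ZMod p, χ (r + c) = 0 := by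
      have h := Fintype.sum_equiv (Equiv.addRight c) (fun r => χ (r + c)) χ (fun x => rfl)
      rw [h]
      exact quadraticChar_sum_zero hring
    have h1 := Finset.sum_erase_add Finset.univ (fun r => χ (r + c)) (Finset.mem_univ (0 : ZMod p))
    have h2 := Finset.sum_erase_add (Finset.univ.erase 0) (fun r => χ (r + c)) hmem1
    simp only [zero_add, neg_add_cancel] at h1 h2
    rw [e, hχc] at h1
    rw [hχdef] at h2
    rw [quadraticChar_zero] at h2
    rw [hTdef, ← hχdef] at *
    linarith
  have hS3 : ∑ r ∈ T, χ r * χ (r + c) = -1 := by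
    rw [hTdef]
    rw [Finset.sum_erase _ (by
      simp only [neg_add_cancel, hχdef, quadraticChar_zero, mul_zero])]
    rw [Finset.sum_erase _ (by
      simp only [hχdef, quadraticChar_zero, zero_mul])]
    exact jacobsthal_sum p hp2 c hc0
  -- cast to ℂ
  have hS1c : ∑ r ∈ T, ((χ r : ℤ) : ℂ) = -1 := by
    rw [← Int.cast_sum, hS1]; norm_num
  have hS2c : ∑ r ∈ T, ((χ (r + c) : ℤ) : ℂ) = 1 := by
    rw [← Int.cast_sum, hS2]; norm_num
  have hS3c : ∑ r ∈ T, (((χ r : ℤ) : ℂ) * ((χ (r + c) : ℤ) : ℂ)) = -1 := by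
    have h : ∑ r ∈ T, (((χ r * χ (r + c) : ℤ)) : ℂ) = -1 := by
      rw [← Int.cast_sum, hS3]; norm_num
    simpa [Int.cast_mul] using h
  rw [hf0, hfc, Finset.sum_add_distrib, Finset.sum_add_distrib, Finset.sum_add_distrib,
    Finset.sum_const, ← Finset.mul_sum, ← Finset.mul_sum, ← Finset.mul_sum,
    hS1c, hS2c, hS3c, nsmul_eq_mul, hcard]
  field_simp
  have hinv2 : x₁ ^ 2 * x₁⁻¹ ^ 2 = 1 := by
    rw [← mul_pow, mul_inv_cancel₀ hx0, one_pow]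
  linear_combination (0 : ℂ) * (x₁ ^ 2 * (p : ℂ) - 3 * x₁ ^ 2 - 2 * x₁ ^ 4 * (p : ℂ) + 6 * x₁ ^ 4
    + x₁ ^ 6 + x₁ ^ 6 * (p : ℂ)) * hinv2
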